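/- Let μ be a set partition of N = {1,…,n} and let F be a finite field with q elements. Then the number of strictly upper-triangular n×n matrices v over F with u_μ·v = v equals q^{n(n−1)/2 − Σ_{(i,j)∈μ} (n−j)}. -/

import Mathlib

open Finset

variable {F : Type*} [Field F] [Fintype F] [DecidableEq F]

/-- A set partition of `{1, …, n}` (modelled as `Fin n`), recorded as its set of arcs:
pairs `(i, j)` with `i < j`.  Note that `Fin n` is 0-indexed, so the element `j ∈ Fin n`
corresponds to `j + 1 ∈ {1, …, n}`. -/
def IsSP (n : ℕ) (lam : Finset (Fin n × Fin n)) : Prop :=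
  (∀ p ∈ lam, p.1 < p.2) ∧ ∀ p ∈ lam, ∀ q ∈ lam, (p.1 = q.1 ↔ p.2 = q.2)

/-- `u_μ = I + ∑_{(i,j) ∈ μ} E_{ij}`. -/
def uMat {F : Type*} [Field F] [Fintype F] [DecidableEq F] {n : ℕ}
    (mu : Finset (Fin n × Fin n)) : Matrix (Fin n) (Fin n) F :=
  1 + ∑ p ∈ mu, Matrix.single p.1 p.2 1

open Classical in
/-- The number of strictly upper-triangular matrices `v` with `u_μ v = v` is
`q ^ (n(n-1)/2 - ∑_{(i,j) ∈ μ} (n - j))`, where `j` is 1-indexed, i.e. the arc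
`(i,j) ∈ μ` (with `j : Fin n` 0-indexed) contributes `n - (j + 1)`. -/
theorem stmt16 (n : ℕ) (mu : Finset (Fin n × Fin n)) (hmu : IsSP n mu) :
    ((univ : Finset (Matrix (Fin n) (Fin n) F)).filter
        (fun v => (∀ i j : Fin n, ¬ i < j → v i j = 0) ∧ uMat mu * v = v)).card =
      Fintype.card F ^ (n * (n - 1) / 2 - ∑ p ∈ mu, (n - ((p.2 : ℕ) + 1))) := by
  classical
  obtain ⟨hlt, hiff⟩ := hmu
  set R : Finset (Fin n) := mu.image Prod.snd with hR
  set S : Finset (Fin n × Fin n) := univ.filter (fun p => p.1 < p.2 ∧ p.1 ∉ R) with hS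
  -- the entry-wise formula for `uMat mu * v`
  have hmul : ∀ (v : Matrix (Fin n) (Fin n) F) (a b : Fin n),
      (uMat (F := F) mu * v) a b = v a b + ∑ p ∈ mu, (if p.1 = a then v p.2 b else 0) := by
    intro v a b
    rw [uMat, Matrix.add_mul, Matrix.one_mul, Matrix.add_apply, Matrix.sum_mul,
      Matrix.sum_apply]
    congr 1
    refine Finset.sum_congr rfl fun p _ => ?_
    rw [Matrix.mul_apply]
    simp only [Matrix.single, Matrix.of_apply, ite_and, boole_mul]
    by_cases h : p.1 = a
    · simp [h]
    · simp [h]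
  -- `uMat mu * v = v` iff the rows indexed by right endpoints vanish
  have hrow : ∀ v : Matrix (Fin n) (Fin n) F,
      uMat mu * v = v ↔ ∀ p ∈ mu, ∀ b, v p.2 b = 0 := by
    intro v
    constructor
    · intro h p hp b
      have h1 : (uMat (F := F) mu * v) p.1 b = v p.1 b := by rw [h]
      rw [hmul] at h1
      have h2 : ∑ q ∈ mu, (if q.1 = p.1 then v q.2 b else 0) = v p.2 b := by
        rw [Finset.sum_eq_single p]
        · simp
        · intro q hq hqp
          have : ¬ q.1 = p.1 := by
            intro he
            exact hqp (Prod.ext he (((hiff q hq p hp).mp he)))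
          simp [this]
        · intro h; exact absurd hp h
      rw [h2] at h1
      exact add_left_cancel (h1.trans (add_zero (v p.1 b)).symm)
    · intro h
      ext a b
      rw [hmul]
      have : ∑ p ∈ mu, (if p.1 = a then v p.2 b else 0) = 0 := by
        refine Finset.sum_eq_zero fun p hp => ?_
        by_cases hc : p.1 = a
        · simp [hc, h p hp b]
        · simp [hc]
      rw [this, add_zero]
  -- the predicate is equivalent to vanishing outside `S`
  have key : ∀ v : Matrix (Fin n) (Fin n) F,
      ((∀ i j : Fin n, ¬ i < j → v i j = 0) ∧ uMat mu * v = v) ↔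
      (∀ a b : Fin n, (a, b) ∉ S → v a b = 0) := by
    intro v
    constructor
    · rintro ⟨h1, h2⟩ a b hab
      simp only [hS, mem_filter, mem_univ, true_and, not_and, not_not] at hab
      by_cases hlt' : a < b
      · have haR : a ∈ R := hab hlt'
        rw [hR, mem_image] at haR
        obtain ⟨p, hp, hpa⟩ := haR
        rw [← hpa]
        exact (hrow v).mp h2 p hp b
      · exact h1 a b hlt'
    · intro h
      refine ⟨fun i j hij => h i j ?_, (hrow v).mpr fun p hp b => h p.2 b ?_⟩
      · simp only [hS, mem_filter, mem_univ, true_and, not_and]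
        intro hc; exact absurd hc hij
      · simp only [hS, mem_filter, mem_univ, true_and, not_and, not_not]
        intro _
        rw [hR, mem_image]
        exact ⟨p, hp, rfl⟩
  -- count matrices vanishing outside `S`
  have hfilter : ((univ : Finset (Matrix (Fin n) (Fin n) F)).filter
        (fun v => (∀ i j : Fin n, ¬ i < j → v i j = 0) ∧ uMat mu * v = v)) =
      (univ.filter (fun v : Matrix (Fin n) (Fin n) F => ∀ a b, (a, b) ∉ S → v a b = 0)) := by
    ext v; simp only [mem_filter, mem_univ, true_and]; exact key v
  rw [hfilter]
  have e : {v : Matrix (Fin n) (Fin n) F // ∀ a b, (a, b) ∉ S → v a b = 0} ≃ (S → F) :=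
  { toFun := fun v s => v.1 s.1.1 s.1.2
    invFun := fun f => ⟨Matrix.of fun a b => if h : (a, b) ∈ S then f ⟨(a, b), h⟩ else 0,
      fun a b hab => by simp [hab]⟩
    left_inv := fun v => by
      ext a b
      by_cases h : (a, b) ∈ S
      · simp [h]
      · simp [h, v.2 a b h]
    right_inv := fun f => by
      ext s
      simp }
  have hcard : (univ.filter (fun v : Matrix (Fin n) (Fin n) F =>
      ∀ a b, (a, b) ∉ S → v a b = 0)).card = Fintype.card F ^ S.card := by
    rw [← Fintype.card_subtype]
    rw [Fintype.card_congr e, Fintype.card_fun, Fintype.card_coe]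
  rw [hcard]
  congr 1
  -- now the cardinality of S
  have hsplit : (univ.filter (fun p : Fin n × Fin n => p.1 < p.2)).card =
      S.card + (univ.filter (fun p : Fin n × Fin n => p.1 < p.2 ∧ p.1 ∈ R)).card := by
    have h := Finset.card_filter_add_card_filter_not
      (s := univ.filter fun p : Fin n × Fin n => p.1 < p.2) (p := fun p => p.1 ∉ R)
    rw [Finset.filter_filter, Finset.filter_filter] at h
    rw [← h, hS]
    congr 1
    congr 1
    ext p
    simp [not_not]
  have hupper : (univ.filter (fun p : Fin n × Fin n => p.1 < p.2)).card = n * (n - 1) / 2 := by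
    rw [Finset.card_filter, ← Finset.univ_product_univ, Finset.sum_product_right]
    have h1 : ∀ b : Fin n, (∑ a : Fin n, if a < b then 1 else 0) = (b : ℕ) := by
      intro b
      rw [← Finset.card_filter]
      have : univ.filter (· < b) = Iio b := by ext x; simp
      rw [this, Fin.card_Iio]
    rw [Finset.sum_congr rfl fun b _ => h1 b]
    exact (Fin.sum_univ_eq_sum_range (fun i => i) n).trans (Finset.sum_range_id n)
  have hbad : (univ.filter (fun p : Fin n × Fin n => p.1 < p.2 ∧ p.1 ∈ R)).card =
      ∑ p ∈ mu, (n - ((p.2 : ℕ) + 1)) := by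
    rw [Finset.card_filter, ← Finset.univ_product_univ, Finset.sum_product]
    have h1 : ∀ a : Fin n, (∑ b : Fin n, if a < b ∧ a ∈ R then 1 else 0) =
        if a ∈ R then n - 1 - (a : ℕ) else 0 := by
      intro a
      by_cases ha : a ∈ R
      · rw [if_pos ha, ← Finset.card_filter]
        have he : univ.filter (fun b => a < b ∧ a ∈ R) = Ioi a := by
          ext x; simp [ha]
        rw [he, Fin.card_Ioi]
      · rw [if_neg ha]
        refine Finset.sum_eq_zero fun b _ => ?_
        simp [ha]
    rw [Finset.sum_congr rfl fun a _ => h1 a, ← Finset.sum_filter,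
      Finset.filter_univ_mem, hR]
    have hinj : ∀ p ∈ mu, ∀ q ∈ mu, p.2 = q.2 → p = q := by
      intro p hp q hq he
      exact Prod.ext ((hiff p hp q hq).mpr he) he
    rw [Finset.sum_image hinj]
    exact Finset.sum_congr rfl fun p _ => by rw [Nat.sub_sub, Nat.add_comm]
  rw [hupper, hbad] at hsplit
  rw [hsplit, Nat.add_sub_cancel]
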